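/- arXiv:1907.04912 — 6 statements merged into one kernel-verified Lean document; each statement's English description precedes it below -/
import Mathlib

section
/- Let A be a unital C*-algebra, b ∈ A, and define the 2×2 matrix λ with entries λ₁₁ = (1 + b*b)^{1/2}, λ₁₂ = b*, λ₂₁ = b, λ₂₂ = (1 + bb*)^{1/2}. Then λ ρ λ = ρ, where ρ = diag(1, -1), and consequently λ⁻¹ = ρ λ ρ. -/
open Matrix

open Polynomial

lemma aux_poly_intertwine {A : Type*} [CStarAlgebra A] (b x y : A)
    (hxy : b * x = y * b) (q : ℝ[X]) :
    b * (aeval x q) = (aeval y q) * b := by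
  have hpow : ∀ n : ℕ, b * x ^ n = y ^ n * b := by
    intro n
    induction n with
    | zero => simp
    | succ n ih =>
      rw [pow_succ, ← mul_assoc, ih, mul_assoc, hxy, pow_succ, mul_assoc]
  rw [aeval_eq_sum_range (R := ℝ) (p := q) x, aeval_eq_sum_range (R := ℝ) (p := q) y,
    Finset.mul_sum, Finset.sum_mul]
  refine Finset.sum_congr rfl fun i _ => ?_
  rw [mul_smul_comm, smul_mul_assoc, hpow]

lemma aux_cfc_intertwine {A : Type*} [CStarAlgebra A] (b x y : A)
    (hx : IsSelfAdjoint x) (hy : IsSelfAdjoint y)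
    (hxy : b * x = y * b) (f : ℝ → ℝ) (hf : Continuous f) :
    b * cfc f x = cfc f y * b := by
  rw [← sub_eq_zero, ← norm_le_zero_iff]
  refine le_of_forall_pos_le_add fun ε hε => ?_
  rw [zero_add]
  set M : ℝ := max (‖x‖ * ‖(1:A)‖) (‖y‖ * ‖(1:A)‖) with hM
  have hspec : ∀ z : A, ‖z‖ * ‖(1:A)‖ ≤ M → spectrum ℝ z ⊆ Set.Icc (-M) M := by
    intro z hz r hr
    have := spectrum.norm_le_norm_mul_of_mem hr
    rw [Real.norm_eq_abs] at this
    exact abs_le.mp (this.trans hz)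
  have hsx := hspec x (le_max_left _ _)
  have hsy := hspec y (le_max_right _ _)
  set ε' : ℝ := ε / (2 * ‖b‖ + 1) with hε'
  have hε'pos : 0 < ε' := div_pos hε (by positivity)
  obtain ⟨q, hq⟩ := exists_polynomial_near_of_continuousOn (-M) M f hf.continuousOn ε' hε'pos
  have hbound : ∀ z : A, IsSelfAdjoint z → spectrum ℝ z ⊆ Set.Icc (-M) M →
      ‖cfc f z - aeval z q‖ ≤ ε' := by
    intro z hz hsz
    rw [← cfc_polynomial q z, ← cfc_sub f (fun r => q.eval r) z hf.continuousOn (Polynomial.continuous q).continuousOn]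
    exact norm_cfc_le hε'pos.le fun r hr => by
      rw [Real.norm_eq_abs, abs_sub_comm]
      exact (hq r (hsz hr)).le
  have key : b * cfc f x - cfc f y * b
      = b * (cfc f x - aeval x q) + (aeval y q - cfc f y) * b := by
    rw [mul_sub, sub_mul, ← aux_poly_intertwine b x y hxy q]
    abel
  calc ‖b * cfc f x - cfc f y * b‖
      ≤ ‖b * (cfc f x - aeval x q)‖ + ‖(aeval y q - cfc f y) * b‖ := by
        rw [key]; exact norm_add_le _ _
    _ ≤ ‖b‖ * ε' + ε' * ‖b‖ := by
        gcongr
        · exact (norm_mul_le _ _).trans (by gcongr; exact hbound x hx hsx)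
        · refine (norm_mul_le _ _).trans ?_
          gcongr
          rw [← norm_neg, neg_sub]
          exact hbound y hy hsy
    _ = 2 * ‖b‖ * ε' := by ring
    _ ≤ (2 * ‖b‖ + 1) * ε' := by nlinarith [hε'pos.le]
    _ = ε := by rw [hε']; field_simp

lemma aux_cfc_sqrt_eq {A : Type*} [CStarAlgebra A] [PartialOrder A] [StarOrderedRing A]
    (s x : A) (hs : 0 ≤ s) (hsq : s * s = x) :
    cfc Real.sqrt x = s := by
  have hx0 : 0 ≤ x := by
    rw [← hsq]
    nth_rewrite 1 [← (IsSelfAdjoint.of_nonneg hs).star_eq]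
    exact star_mul_self_nonneg s
  have hc0 : 0 ≤ cfc Real.sqrt x := cfc_nonneg fun r _ => Real.sqrt_nonneg r
  have hc2 : cfc Real.sqrt x * cfc Real.sqrt x = x := by
    rw [← cfc_mul Real.sqrt Real.sqrt x]
    have : cfc (fun r => Real.sqrt r * Real.sqrt r) x = cfc (id : ℝ → ℝ) x :=
      cfc_congr fun r hr => Real.mul_self_sqrt (spectrum_nonneg_of_nonneg hx0 hr)
    rw [this, cfc_id ℝ x]
  rw [← CFC.sqrt_unique hc2 hc0, CFC.sqrt_unique hsq hs]


/-- Let `b` be an element of a unital C*-algebra `A`, `s = (1 + b*b)^{1/2}`,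
`t = (1 + bb*)^{1/2}`, and `λ = [[s, b*], [b, t]] ∈ M₂(A)`. Then `λ ρ λ = ρ` where
`ρ = diag(1,-1)`, and consequently `λ⁻¹ = ρ λ ρ`. -/
theorem stmt_3 {A : Type*} [CStarAlgebra A] [PartialOrder A] [StarOrderedRing A]
    (b s t : A)
    (hs_pos : 0 ≤ s) (hs_sq : s * s = 1 + star b * b)
    (ht_pos : 0 ≤ t) (ht_sq : t * t = 1 + b * star b)
    (l ρ : Matrix (Fin 2) (Fin 2) A)
    (hl : l = !![s, star b; b, t])
    (hρ : ρ = !![1, 0; 0, -1]) :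
    l * ρ * l = ρ ∧ l * (ρ * l * ρ) = 1 ∧ (ρ * l * ρ) * l = 1 := by
  have hxy : b * (1 + star b * b) = (1 + b * star b) * b := by
    simp [mul_add, add_mul, mul_assoc]
  have hx : IsSelfAdjoint (1 + star b * b) := by
    refine IsSelfAdjoint.add ?_ (IsSelfAdjoint.star_mul_self b)
    exact IsSelfAdjoint.one A
  have hy : IsSelfAdjoint (1 + b * star b) := by
    refine IsSelfAdjoint.add ?_ (IsSelfAdjoint.mul_star_self b)
    exact IsSelfAdjoint.one A
  have hs' : cfc Real.sqrt (1 + star b * b) = s := aux_cfc_sqrt_eq s _ hs_pos hs_sq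
  have ht' : cfc Real.sqrt (1 + b * star b) = t := aux_cfc_sqrt_eq t _ ht_pos ht_sq
  have key : b * s = t * b := by
    rw [← hs', ← ht']
    exact aux_cfc_intertwine b _ _ hx hy hxy Real.sqrt Real.continuous_sqrt
  have key2 : s * star b = star b * t := by
    have := congrArg star key
    simp only [StarMul.star_mul, (IsSelfAdjoint.of_nonneg hs_pos).star_eq,
      (IsSelfAdjoint.of_nonneg ht_pos).star_eq] at this
    exact this
  have h1 : l * ρ * l = ρ := by
    subst hl hρ
    rw [Matrix.mul_fin_two, Matrix.mul_fin_two]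
    ext i j
    fin_cases i <;> fin_cases j <;> simp [mul_assoc] <;>
      first
      | (rw [key2]; abel)
      | (rw [key]; abel)
      | (rw [hs_sq]; abel)
      | (rw [ht_sq]; abel)
  refine ⟨h1, ?_, ?_⟩
  · have hρ2 : ρ * ρ = 1 := by
      subst hρ; rw [Matrix.mul_fin_two]; simp [← Matrix.one_fin_two]
    rw [← mul_assoc, ← mul_assoc, h1, hρ2]
  · have hρ2 : ρ * ρ = 1 := by
      subst hρ; rw [Matrix.mul_fin_two]; simp [← Matrix.one_fin_two]
    rw [mul_assoc, mul_assoc, ← mul_assoc l ρ l, h1, hρ2]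
end

section
/- Let A be a unital C*-algebra and x, y ∈ A² with x₁, y₁ invertible and θ(x,x) = θ(y,y) = 1 where θ(x,y) = x₁*y₁ - x₂*y₂. Then p_x = p_y (where p_x = x x* ρ, ρ = diag(1,-1)) if and only if there exists a unitary u ∈ A with y = x u (i.e. y₁ = x₁u, y₂ = x₂u). -/
open Matrix

/-- Let `x, y ∈ A²` with invertible first coordinates and `θ(x,x) = θ(y,y) = 1`. Then
`p_x = p_y` (where `p_x = x x* ρ`) if and only if `y = x u` for some unitary `u ∈ A`. -/
theorem stmt_7 {A : Type*} [CStarAlgebra A]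
    (x₁ x₂ y₁ y₂ : A) (hx₁ : IsUnit x₁) (hy₁ : IsUnit y₁)
    (hx : star x₁ * x₁ - star x₂ * x₂ = 1)
    (hy : star y₁ * y₁ - star y₂ * y₂ = 1) :
    (!![x₁ * star x₁, -(x₁ * star x₂); x₂ * star x₁, -(x₂ * star x₂)] :
        Matrix (Fin 2) (Fin 2) A) =
      !![y₁ * star y₁, -(y₁ * star y₂); y₂ * star y₁, -(y₂ * star y₂)] ↔
    ∃ u : A, u * star u = 1 ∧ star u * u = 1 ∧ y₁ = x₁ * u ∧ y₂ = x₂ * u := by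
  letI := CStarAlgebra.spectralOrder A
  letI := CStarAlgebra.spectralOrderedRing A
  constructor
  · intro h
    have h00 : x₁ * star x₁ = y₁ * star y₁ := by
      have := congrFun (congrFun h 0) 0
      simpa using this
    have h10 : x₂ * star x₁ = y₂ * star y₁ := by
      have := congrFun (congrFun h 1) 0
      simpa using this
    set v := hx₁.unit with hvdef
    have hv : (v : A) = x₁ := hx₁.unit_spec
    set w : A := ((v⁻¹ : Aˣ) : A) with hwdef
    have hwx : w * x₁ = 1 := by rw [← hv]; exact v.inv_mul
    have hxw : x₁ * w = 1 := by rw [← hv]; exact v.mul_inv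
    have hsxw : star x₁ * star w = 1 := by rw [← StarMul.star_mul, hwx, star_one]
    have hswx : star w * star x₁ = 1 := by rw [← StarMul.star_mul, hxw, star_one]
    set u : A := w * y₁ with hudef
    have hy1 : x₁ * u = y₁ := by rw [hudef, ← mul_assoc, hxw, one_mul]
    have huu : u * star u = 1 := by
      calc u * star u = w * (y₁ * star y₁) * star w := by
            rw [hudef, StarMul.star_mul]; noncomm_ring
        _ = w * (x₁ * star x₁) * star w := by rw [← h00]
        _ = (w * x₁) * (star x₁ * star w) := by noncomm_ring
        _ = 1 := by rw [hwx, hsxw, one_mul]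
    have hx2 : x₂ = y₂ * star u := by
      calc x₂ = (x₂ * star x₁) * star w := by
            rw [mul_assoc, hsxw, mul_one]
        _ = y₂ * star y₁ * star w := by rw [h10]
        _ = y₂ * star u := by rw [hudef, StarMul.star_mul]; noncomm_ring
    set p : A := star u * u with hpdef
    have hpsa : star p = p := by rw [hpdef, StarMul.star_mul, star_star]
    have hpp : p * p = p := by
      rw [hpdef]
      calc star u * u * (star u * u) = star u * (u * star u) * u := by noncomm_ring
        _ = star u * u := by rw [huu, mul_one]
    have hx2u : x₂ * u = y₂ * p := by rw [hx2, hpdef, mul_assoc]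
    have hxx : star x₁ * x₁ = 1 + star x₂ * x₂ := by
      rw [← hx, sub_add_cancel]
    have key : p + p * (star y₂ * y₂) * p - star y₂ * y₂ = 1 := by
      have e1 : star y₁ * y₁ = p + p * (star y₂ * y₂) * p := by
        calc star y₁ * y₁ = star u * (star x₁ * x₁) * u := by
              rw [← hy1, StarMul.star_mul]; noncomm_ring
          _ = star u * (1 + star x₂ * x₂) * u := by rw [hxx]
          _ = star u * u + star (x₂ * u) * (x₂ * u) := by
              simp only [StarMul.star_mul]; noncomm_ring
          _ = p + star (y₂ * p) * (y₂ * p) := by rw [hx2u, hpdef]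
          _ = p + p * (star y₂ * y₂) * p := by
              rw [StarMul.star_mul, hpsa]; noncomm_ring
      rw [← e1]; exact hy
    set q : A := 1 - p with hqdef
    have hqsa : star q = q := by rw [hqdef, star_sub, star_one, hpsa]
    have hqq : q * q = q := by rw [hqdef]; noncomm_ring [hpp]
    have hpq : p * q = 0 := by rw [hqdef]; noncomm_ring [hpp]
    have hqp : q * p = 0 := by rw [hqdef]; noncomm_ring [hpp]
    have keyq : q = -(star (y₂ * q) * (y₂ * q)) := by
      have := congrArg (fun z => q * z * q) key
      rw [StarMul.star_mul, hqsa]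
      calc q = q * 1 * q := by rw [mul_one, hqq]
        _ = q * (p + p * (star y₂ * y₂) * p - star y₂ * y₂) * q := by rw [key]
        _ = q * p * q + (q * p) * (star y₂ * y₂) * (p * q) - q * (star y₂ * y₂) * q := by
            noncomm_ring
        _ = -(q * (star y₂ * y₂) * q) := by rw [hqp, hpq]; noncomm_ring
        _ = -(q * star y₂ * (y₂ * q)) := by noncomm_ring
    have hq0 : q = 0 := by
      have h1 : (0 : A) ≤ q := by
        have : q = star q * q := by rw [hqsa, hqq]
        rw [this]; exact star_mul_self_nonneg q
      have h2 : q ≤ 0 := by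
        rw [keyq]
        exact neg_nonpos_of_nonneg (star_mul_self_nonneg _)
      exact le_antisymm h2 h1
    have hp1 : p = 1 := by
      have : (1 : A) - p = 0 := hq0
      exact (sub_eq_zero.mp this).symm
    refine ⟨u, huu, by rw [← hpdef, hp1], hy1.symm, ?_⟩
    rw [hx2u, hp1, mul_one]
  · rintro ⟨u, huu, hsuu, hy1, hy2⟩
    have key : ∀ a b : A, (a * u) * star (b * u) = a * star b := by
      intro a b
      rw [StarMul.star_mul]
      calc a * u * (star u * star b) = a * (u * star u) * star b := by noncomm_ring
        _ = a * star b := by rw [huu, mul_one]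
    have k2 : ∀ a b : A, a * u * (star u * b) = a * b := by
      intro a b
      rw [← mul_assoc, mul_assoc a u, huu, mul_one]
    subst hy1 hy2
    ext i j
    fin_cases i <;> fin_cases j <;> simp [StarMul.star_mul, k2]
end

section
/- Let A be a unital C*-algebra and x ∈ A² with θ(x,x) = 1 and x₁ invertible. If z ∈ A² lies in the nullspace of p_x = xx*ρ (i.e. p_x z = 0), then θ(x,z) = 0 and θ(z,z) ≤ 0. -/
open Matrix

/-- Let `x ∈ A²` with `θ(x,x) = 1` and `x₁` invertible. If `z` lies in the nullspace of
`p_x = x x* ρ` (i.e. `p_x z = 0`), then `θ(x,z) = 0` and `θ(z,z) ≤ 0`. -/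
theorem stmt_9 {A : Type*} [CStarAlgebra A] [PartialOrder A] [StarOrderedRing A]
    (x₁ x₂ z₁ z₂ : A) (hx₁ : IsUnit x₁)
    (hx : star x₁ * x₁ - star x₂ * x₂ = 1)
    (hz : (!![x₁ * star x₁, -(x₁ * star x₂); x₂ * star x₁, -(x₂ * star x₂)] :
        Matrix (Fin 2) (Fin 2) A).mulVec ![z₁, z₂] = 0) :
    star x₁ * z₁ - star x₂ * z₂ = 0 ∧ star z₁ * z₁ - star z₂ * z₂ ≤ 0 := by
  obtain ⟨u, rfl⟩ := hx₁
  set y : A := ((u⁻¹ : Aˣ) : A) with hy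
  have hyx : y * (u : A) = 1 := u.inv_mul
  have hxy : (u : A) * y = 1 := u.mul_inv
  have h0 := congrFun hz 0
  simp [mulVec, dotProduct, Fin.sum_univ_two] at h0
  have hfirst : star (u : A) * z₁ - star x₂ * z₂ = 0 := by
    have h : (u : A) * (star (u : A) * z₁ - star x₂ * z₂) = 0 := by
      rw [mul_sub, ← mul_assoc, ← mul_assoc, sub_eq_zero]
      linear_combination (norm := noncomm_ring) h0
    calc star (u : A) * z₁ - star x₂ * z₂
        = y * ((u : A) * (star (u : A) * z₁ - star x₂ * z₂)) := by
          rw [← mul_assoc, hyx, one_mul]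
      _ = 0 := by rw [h, mul_zero]
  refine ⟨hfirst, ?_⟩
  have h1 : star (u : A) * z₁ = star x₂ * z₂ := sub_eq_zero.mp hfirst
  set c : A := x₂ * y with hc
  have hz₁ : z₁ = star c * z₂ := by
    have hsy : star y * star (u : A) = 1 := by
      rw [← StarMul.star_mul, hxy, star_one]
    calc z₁ = star y * star (u : A) * z₁ := by rw [hsy, one_mul]
      _ = star y * (star (u : A) * z₁) := by rw [mul_assoc]
      _ = star y * (star x₂ * z₂) := by rw [h1]
      _ = star c * z₂ := by rw [hc, StarMul.star_mul, mul_assoc]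
  have hx₂ : star x₂ * x₂ = star (u : A) * (u : A) - 1 := by linear_combination (norm := noncomm_ring) -hx
  have hcc : star c * c = 1 - star y * y := by
    rw [hc, StarMul.star_mul]
    calc star y * star x₂ * (x₂ * y) = star y * (star x₂ * x₂) * y := by
          rw [mul_assoc, mul_assoc, mul_assoc]
      _ = star y * (star (u : A) * (u : A)) * y - star y * y := by
          rw [hx₂]; noncomm_ring
      _ = star ((u:A) * y) * ((u:A) * y) - star y * y := by
          rw [StarMul.star_mul]; noncomm_ring
      _ = 1 - star y * y := by rw [hxy, star_one, one_mul]
  have hccle : star c * c ≤ 1 := by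
    rw [hcc]
    simp [star_mul_self_nonneg y]
  have hnorm : ‖c * star c‖ ≤ 1 := by
    rw [CStarRing.norm_self_mul_star, ← CStarRing.norm_star_mul_self]
    exact (CStarAlgebra.norm_le_one_iff_of_nonneg _ (star_mul_self_nonneg c)).mpr hccle
  have h2 : c * star c ≤ 1 :=
    (CStarAlgebra.norm_le_one_iff_of_nonneg _ (mul_star_self_nonneg c)).mp hnorm
  have key : star z₁ * z₁ ≤ star z₂ * z₂ := by
    have := star_left_conjugate_le_conjugate h2 z₂
    rw [mul_one] at this
    calc star z₁ * z₁ = star z₂ * (c * star c) * z₂ := by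
          rw [hz₁, StarMul.star_mul, star_star]; noncomm_ring
      _ ≤ star z₂ * z₂ := this
  exact sub_nonpos.mpr key
end

section
/- Let A be a unital C*-algebra, ρ = diag(1,-1) ∈ M₂(A), and let q ∈ M₂(A) be an idempotent with ρq*ρ = q. Then ρ(2q-1) is positive if and only if there exists a positive invertible λ ∈ M₂(A) with λρ = ρλ⁻¹ and q = λ p λ⁻¹, where p = diag(1,0). -/
section Commute

variable {A : Type*} [CStarAlgebra A]

lemma cfc_mem_elemental' (a : A) (g : ℂ → ℂ) :
    cfc g a ∈ StarAlgebra.elemental ℂ a := by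
  apply cfc_cases (· ∈ StarAlgebra.elemental ℂ a) a _ (zero_mem _)
  intro hg hnorm
  rw [@cfcHom_eq_of_isStarNormal _ _ a hnorm]
  exact SetLike.coe_mem _

lemma commute_cfc_of_commute {a c : A} (ha : IsSelfAdjoint a)
    (hc : star c = c) (h : c * a = a * c) (f : ℝ → ℝ) :
    c * cfc f a = cfc f a * c := by
  rw [cfc_real_eq_complex f ha]
  have hmem := cfc_mem_elemental' a (fun x : ℂ => (f x.re : ℂ))
  have hclosed : IsClosed ((StarSubalgebra.centralizer ℂ {c} : Set A)) := by
    rw [StarSubalgebra.coe_centralizer]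
    have : (({c} : Set A) ∪ star {c}).centralizer =
        ⋂ g ∈ (({c} : Set A) ∪ star {c}), {z | g * z = z * g} := by
      ext w; simp [Set.mem_centralizer_iff]
    rw [this]
    exact isClosed_biInter fun g _ => isClosed_eq (continuous_mul_left g) (continuous_mul_right g)
  have hmemc : a ∈ StarSubalgebra.centralizer ℂ {c} := by
    rw [StarSubalgebra.mem_centralizer_iff]
    intro g hg
    rw [Set.mem_singleton_iff] at hg
    subst hg
    exact ⟨h, by rw [hc]; exact h⟩
  have h2 := StarAlgebra.elemental.le_of_mem hclosed hmemc hmem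
  rw [StarSubalgebra.mem_centralizer_iff] at h2
  exact (h2 c rfl).1

lemma cfc_mul_eq {a : A} {f g h : ℝ → ℝ}
    (hf : ContinuousOn f (spectrum ℝ a)) (hg : ContinuousOn g (spectrum ℝ a))
    (hfg : ∀ t ∈ spectrum ℝ a, f t * g t = h t) :
    cfc f a * cfc g a = cfc h a := by
  rw [← cfc_mul f g a hf hg]
  exact cfc_congr hfg

end Commute

section Scalar

variable {A : Type*} [CStarAlgebra A]

lemma aux_scalar (a b d : A)
    (ha : IsSelfAdjoint a) (hd : IsSelfAdjoint d)
    (E1 : b * star b = a * a - a) (E2 : a * b = b - b * d) (E3 : star b * b = d * d - d)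
    (P1 : ∃ r₁ r₂ : A, a + a - 1 = star r₁ * r₁ + star r₂ * r₂)
    (P2 : ∃ r₁ r₂ : A, 1 - (d + d) = star r₁ * r₁ + star r₂ * r₂) :
    ∃ x y z u v w : A,
      x * x - y * star y = 1 ∧ x * y = y * z ∧ star y * x = z * star y ∧
      z * z - star y * y = 1 ∧
      x * x = a ∧ -(x * y) = b ∧ star y * x = -star b ∧ -(star y * y) = d ∧
      star u = u ∧ star w = w ∧
      u * u = x ∧ u * v = y ∧ star v * u = star y ∧ star v * v + w * w = z := by
  letI : PartialOrder A := CStarAlgebra.spectralOrder A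
  letI : StarOrderedRing A := CStarAlgebra.spectralOrderedRing A
  have hP1 : (0 : A) ≤ a + a - 1 := by
    obtain ⟨r₁, r₂, h⟩ := P1
    rw [h]; exact add_nonneg (star_mul_self_nonneg _) (star_mul_self_nonneg _)
  have hP2 : (0 : A) ≤ 1 - (d + d) := by
    obtain ⟨r₁, r₂, h⟩ := P2
    rw [h]; exact add_nonneg (star_mul_self_nonneg _) (star_mul_self_nonneg _)
  -- spectrum bounds
  have hσa : ∀ t ∈ spectrum ℝ a, (1/2 : ℝ) ≤ t := by
    have e1 : cfc (fun t : ℝ => t + t - 1) a = a + a - 1 := by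
      rw [cfc_sub (fun t : ℝ => t + t) (fun _ : ℝ => (1:ℝ)) a (by fun_prop) (by fun_prop),
        cfc_add a (fun t : ℝ => t) (fun t : ℝ => t) (by fun_prop) (by fun_prop),
        cfc_id' ℝ a, cfc_const_one ℝ a]
    have h2 := (cfc_nonneg_iff (fun t : ℝ => t + t - 1) a (by fun_prop) ha).mp
      (by rw [e1]; exact hP1)
    intro t ht
    have := h2 t ht
    linarith
  have hσd : ∀ t ∈ spectrum ℝ d, t ≤ (1/2 : ℝ) := by
    have e1 : cfc (fun t : ℝ => 1 - (t + t)) d = 1 - (d + d) := by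
      rw [cfc_sub (fun _ : ℝ => (1:ℝ)) (fun t : ℝ => t + t) d (by fun_prop) (by fun_prop),
        cfc_add d (fun t : ℝ => t) (fun t : ℝ => t) (by fun_prop) (by fun_prop),
        cfc_id' ℝ d, cfc_const_one ℝ d]
    have h2 := (cfc_nonneg_iff (fun t : ℝ => 1 - (t + t)) d (by fun_prop) hd).mp
      (by rw [e1]; exact hP2)
    intro t ht
    have := h2 t ht
    linarith
  -- continuity facts
  have hax : ∀ t ∈ spectrum ℝ a, (0:ℝ) < Real.sqrt t :=
    fun t ht => Real.sqrt_pos.mpr (by linarith [hσa t ht])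
  have hdz : ∀ t ∈ spectrum ℝ d, (0:ℝ) < Real.sqrt (1 - t) :=
    fun t ht => Real.sqrt_pos.mpr (by linarith [hσd t ht])
  have hcx : ContinuousOn (fun t : ℝ => Real.sqrt t) (spectrum ℝ a) :=
    Real.continuous_sqrt.continuousOn
  have hcxi : ContinuousOn (fun t : ℝ => (Real.sqrt t)⁻¹) (spectrum ℝ a) :=
    hcx.inv₀ fun t ht => (hax t ht).ne'
  have hcu : ContinuousOn (fun t : ℝ => Real.sqrt (Real.sqrt t)) (spectrum ℝ a) :=
    (Real.continuous_sqrt.comp Real.continuous_sqrt).continuousOn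
  have hcui : ContinuousOn (fun t : ℝ => (Real.sqrt (Real.sqrt t))⁻¹) (spectrum ℝ a) :=
    hcu.inv₀ fun t ht => (Real.sqrt_pos.mpr (hax t ht)).ne'
  have hcz : ContinuousOn (fun t : ℝ => Real.sqrt (1 - t)) (spectrum ℝ d) :=
    (Real.continuous_sqrt.comp (continuous_const.sub continuous_id)).continuousOn
  have hczi : ContinuousOn (fun t : ℝ => (Real.sqrt (1 - t))⁻¹) (spectrum ℝ d) :=
    hcz.inv₀ fun t ht => (hdz t ht).ne'
  have hczz : ContinuousOn (fun t : ℝ => Real.sqrt (Real.sqrt (1 - t))) (spectrum ℝ d) :=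
    (Real.continuous_sqrt.comp (Real.continuous_sqrt.comp (continuous_const.sub continuous_id))).continuousOn
  have hcw : ContinuousOn (fun t : ℝ => (Real.sqrt (Real.sqrt (1 - t)))⁻¹) (spectrum ℝ d) :=
    hczz.inv₀ fun t ht => (Real.sqrt_pos.mpr (hdz t ht)).ne'
  -- elements
  set x : A := cfc (fun t : ℝ => Real.sqrt t) a with hxdef
  set xi : A := cfc (fun t : ℝ => (Real.sqrt t)⁻¹) a with hxidef
  set u : A := cfc (fun t : ℝ => Real.sqrt (Real.sqrt t)) a with hudef
  set ui : A := cfc (fun t : ℝ => (Real.sqrt (Real.sqrt t))⁻¹) a with huidef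
  set z : A := cfc (fun t : ℝ => Real.sqrt (1 - t)) d with hzdef
  set zi : A := cfc (fun t : ℝ => (Real.sqrt (1 - t))⁻¹) d with hzidef
  set zz : A := cfc (fun t : ℝ => Real.sqrt (Real.sqrt (1 - t))) d with hzzdef
  set w : A := cfc (fun t : ℝ => (Real.sqrt (Real.sqrt (1 - t)))⁻¹) d with hwdef
  -- star facts
  have hsx : star x = x := (cfc_predicate (fun t : ℝ => Real.sqrt t) a : IsSelfAdjoint _).star_eq
  have hsxi : star xi = xi := (cfc_predicate (fun t : ℝ => (Real.sqrt t)⁻¹) a : IsSelfAdjoint _).star_eq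
  have hsu : star u = u := (cfc_predicate (fun t : ℝ => Real.sqrt (Real.sqrt t)) a : IsSelfAdjoint _).star_eq
  have hsui : star ui = ui := (cfc_predicate (fun t : ℝ => (Real.sqrt (Real.sqrt t))⁻¹) a : IsSelfAdjoint _).star_eq
  have hsz : star z = z := (cfc_predicate (fun t : ℝ => Real.sqrt (1 - t)) d : IsSelfAdjoint _).star_eq
  have hszi : star zi = zi := (cfc_predicate (fun t : ℝ => (Real.sqrt (1 - t))⁻¹) d : IsSelfAdjoint _).star_eq
  have hszz : star zz = zz := (cfc_predicate (fun t : ℝ => Real.sqrt (Real.sqrt (1 - t))) d : IsSelfAdjoint _).star_eq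
  have hsw : star w = w := (cfc_predicate (fun t : ℝ => (Real.sqrt (Real.sqrt (1 - t)))⁻¹) d : IsSelfAdjoint _).star_eq
  -- nonnegativity
  have hxnn : (0:A) ≤ x := cfc_nonneg fun t _ => Real.sqrt_nonneg t
  -- products of functions of a
  have hxx : x * x = a := by
    rw [hxdef, cfc_mul_eq hcx hcx (h := fun t : ℝ => t)
      (fun t ht => Real.mul_self_sqrt (by linarith [hσa t ht]))]
    exact cfc_id' ℝ a
  have hxxi : x * xi = 1 := by
    rw [hxdef, hxidef, cfc_mul_eq hcx hcxi (h := fun _ : ℝ => (1:ℝ))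
      (fun t ht => mul_inv_cancel₀ (hax t ht).ne')]
    exact cfc_const_one ℝ a
  have hxix : xi * x = 1 := by
    rw [hxdef, hxidef, cfc_mul_eq hcxi hcx (h := fun _ : ℝ => (1:ℝ))
      (fun t ht => inv_mul_cancel₀ (hax t ht).ne')]
    exact cfc_const_one ℝ a
  have huu : u * u = x := by
    rw [hudef, hxdef, cfc_mul_eq hcu hcu (h := fun t : ℝ => Real.sqrt t)
      (fun t ht => Real.mul_self_sqrt (Real.sqrt_nonneg t))]
  have huui : u * ui = 1 := by
    rw [hudef, huidef, cfc_mul_eq hcu hcui (h := fun _ : ℝ => (1:ℝ))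
      (fun t ht => mul_inv_cancel₀ (Real.sqrt_pos.mpr (hax t ht)).ne')]
    exact cfc_const_one ℝ a
  have huiu : ui * u = 1 := by
    rw [hudef, huidef, cfc_mul_eq hcui hcu (h := fun _ : ℝ => (1:ℝ))
      (fun t ht => inv_mul_cancel₀ (Real.sqrt_pos.mpr (hax t ht)).ne')]
    exact cfc_const_one ℝ a
  have huiui : ui * ui = xi := by
    rw [huidef, hxidef, cfc_mul_eq hcui hcui (h := fun t : ℝ => (Real.sqrt t)⁻¹)
      (fun t ht => by rw [← mul_inv, Real.mul_self_sqrt (Real.sqrt_nonneg t)])]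
  -- products of functions of d
  have hzz1 : z * z = 1 - d := by
    rw [hzdef, cfc_mul_eq hcz hcz (h := fun t : ℝ => 1 - t)
      (fun t ht => Real.mul_self_sqrt (by linarith [hσd t ht]))]
    rw [cfc_sub (fun _ : ℝ => (1:ℝ)) (fun t : ℝ => t) d (by fun_prop) (by fun_prop),
      cfc_id' ℝ d, cfc_const_one ℝ d]
  have hzzi : z * zi = 1 := by
    rw [hzdef, hzidef, cfc_mul_eq hcz hczi (h := fun _ : ℝ => (1:ℝ))
      (fun t ht => mul_inv_cancel₀ (hdz t ht).ne')]
    exact cfc_const_one ℝ d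
  have hziz : zi * z = 1 := by
    rw [hzdef, hzidef, cfc_mul_eq hczi hcz (h := fun _ : ℝ => (1:ℝ))
      (fun t ht => inv_mul_cancel₀ (hdz t ht).ne')]
    exact cfc_const_one ℝ d
  have hzz2 : zz * zz = z := by
    rw [hzzdef, hzdef, cfc_mul_eq hczz hczz (h := fun t : ℝ => Real.sqrt (1 - t))
      (fun t ht => Real.mul_self_sqrt (Real.sqrt_nonneg _))]
  have hww : w * w = zi := by
    rw [hwdef, hzidef, cfc_mul_eq hcw hcw (h := fun t : ℝ => (Real.sqrt (1 - t))⁻¹)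
      (fun t ht => by rw [← mul_inv, Real.mul_self_sqrt (Real.sqrt_nonneg _)])]
  have hdzi : zi * d = d * zi := by
    have h1 : Commute zi (cfc (fun t : ℝ => t) d) :=
      (cfc_commute_cfc (fun t : ℝ => (Real.sqrt (1 - t))⁻¹) (fun t : ℝ => t) d)
    rw [cfc_id' ℝ d] at h1
    exact h1.eq
  -- THE INTERTWINING: x * b = b * z
  have hxb : x * b = b * z := by
    set T : A := x * b - b * z with hT
    have h1 : x * T + T * z = 0 := by
      have e : x * T + T * z = x * x * b - b * (z * z) := by rw [hT]; noncomm_ring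
      rw [e, hxx, hzz1, mul_sub, mul_one, E2, sub_self]
    have hxT : x * T = -(T * z) := eq_neg_of_add_eq_zero_left h1
    have hsT : star T * x = -(z * star T) := by
      have h2 := congrArg star hxT
      rwa [star_mul, star_neg, star_mul, hsx, hsz] at h2
    set W : A := star T * T with hW
    have hWz : W * z = z * W := by
      have e1 : star T * (x * T) = -(W * z) := by
        rw [hxT, mul_neg, ← mul_assoc, hW]
      have e2 : star T * (x * T) = -(z * W) := by
        rw [← mul_assoc, hsT, neg_mul, mul_assoc, hW]
      exact neg_injective (e1.symm.trans e2)
    have hWd : W * d = d * W := by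
      have e3 : W * (z * z) = (z * z) * W := by
        rw [← mul_assoc, hWz, mul_assoc, hWz, mul_assoc]
      rw [hzz1] at e3
      rw [mul_sub, sub_mul, mul_one, one_mul] at e3
      calc W * d = W - (W - W * d) := (sub_sub_cancel W (W*d)).symm
        _ = W - (W - d * W) := by rw [e3]
        _ = d * W := sub_sub_cancel W (d*W)
    have hWzz : W * zz = zz * W := by
      rw [hzzdef]
      exact commute_cfc_of_commute hd (by rw [hW, star_mul, star_star]) hWd _
    have hpos1 : (0:A) ≤ star T * (x * T) := by
      have := star_left_conjugate_nonneg hxnn T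
      rwa [mul_assoc] at this
    have hneg : W * z ≤ 0 := by
      have e1 : star T * (x * T) = -(W * z) := by
        rw [hxT, mul_neg, ← mul_assoc, hW]
      rw [e1] at hpos1
      exact neg_nonneg.mp hpos1
    have hpos2 : (0:A) ≤ W * z := by
      have h5 : W * z = star zz * W * zz := by
        rw [hszz, ← hzz2, ← mul_assoc, hWzz, mul_assoc, ← mul_assoc]
      rw [h5]
      exact star_left_conjugate_nonneg (hW ▸ star_mul_self_nonneg T) zz
    have hWz0 : W * z = 0 := le_antisymm hneg hpos2
    have hW0 : W = 0 := by
      have h6 := congrArg (· * zi) hWz0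
      simpa [mul_assoc, hzzi] using h6
    have hT0 : T = 0 := by
      rw [hW] at hW0
      exact (CStarRing.star_mul_self_eq_zero_iff T).mp hW0
    rw [hT] at hT0
    exact sub_eq_zero.mp hT0
  -- derived intertwinings
  have hxib : xi * b = b * zi := by
    have h' : x * (b * zi) = b := by
      rw [← mul_assoc, hxb, mul_assoc, hzzi, mul_one]
    calc xi * b = xi * (x * (b * zi)) := by rw [h']
      _ = (xi * x) * (b * zi) := (mul_assoc _ _ _).symm
      _ = b * zi := by rw [hxix, one_mul]
  have hbx : star b * x = z * star b := by
    have h2 := congrArg star hxb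
    rwa [star_mul, star_mul, hsx, hsz] at h2
  have hbxi : star b * xi = zi * star b := by
    have h2 := congrArg star hxib
    rwa [star_mul, star_mul, hsxi, hszi] at h2
  -- the blocks
  set y : A := -(xi * b) with hydef
  set v : A := ui * y with hvdef
  have hsy : star y = -(star b * xi) := by rw [hydef, star_neg, star_mul, hsxi]
  have hax' : a * xi = x := by rw [← hxx, mul_assoc, hxxi, mul_one]
  have hxa' : xi * a = x := by rw [← hxx, ← mul_assoc, hxix, one_mul]
  -- y * star y = a - 1
  have hyy : y * star y = a - 1 := by
    calc y * star y = (xi * b) * (star b * xi) := by rw [hydef, hsy, neg_mul_neg]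
      _ = xi * ((b * star b) * xi) := by simp only [mul_assoc]
      _ = xi * ((a * a - a) * xi) := by rw [E1]
      _ = (xi * a) * (a * xi) - (xi * a) * xi := by simp only [sub_mul, mul_sub, mul_assoc]
      _ = x * x - x * xi := by rw [hax', hxa']
      _ = a - 1 := by rw [hxx, hxxi]
  -- star y * y = -d
  have hzz1d : (zi * zi) * (1 - d) = 1 := by
    rw [← hzz1, ← mul_assoc, mul_assoc zi zi z, hziz, mul_one, hziz]
  have hyy2 : star y * y = -d := by
    have step : star y * y = zi * (zi * (star b * b)) := by
      calc star y * y = (star b * xi) * (xi * b) := by rw [hydef, hsy, neg_mul_neg]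
        _ = ((star b * xi) * xi) * b := (mul_assoc _ _ _).symm
        _ = ((zi * star b) * xi) * b := by rw [hbxi]
        _ = (zi * (star b * xi)) * b := by simp only [mul_assoc]
        _ = (zi * (zi * star b)) * b := by rw [hbxi]
        _ = zi * (zi * (star b * b)) := by simp only [mul_assoc]
    rw [step, E3]
    have hdd : d * d - d = -(d * (1 - d)) := by noncomm_ring
    rw [hdd, ← mul_assoc, mul_neg]
    have comm2 : (zi * zi) * d = d * (zi * zi) := by
      rw [mul_assoc, hdzi, ← mul_assoc, hdzi, mul_assoc]
    calc -((zi * zi) * (d * (1 - d))) = -(((zi * zi) * d) * (1 - d)) := by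
          simp only [mul_assoc]
      _ = -((d * (zi * zi)) * (1 - d)) := by rw [comm2]
      _ = -(d * ((zi * zi) * (1 - d))) := by rw [mul_assoc]
      _ = -d := by rw [hzz1d, mul_one]
  refine ⟨x, y, z, u, v, w, ?_, ?_, ?_, ?_, hxx, ?_, ?_, ?_, hsu, hsw, huu, ?_, ?_, ?_⟩
  · -- x * x - y * star y = 1
    rw [hxx, hyy]; abel
  · -- x * y = y * z
    calc x * y = -(x * (xi * b)) := by rw [hydef, mul_neg]
      _ = -((x * xi) * b) := by rw [mul_assoc]
      _ = -b := by rw [hxxi, one_mul]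
      _ = -((xi * x) * b) := by rw [hxix, one_mul]
      _ = -(xi * (x * b)) := by rw [mul_assoc]
      _ = -(xi * (b * z)) := by rw [hxb]
      _ = -((xi * b) * z) := by rw [mul_assoc]
      _ = y * z := by rw [hydef, neg_mul]
  · -- star y * x = z * star y
    calc star y * x = -((star b * xi) * x) := by rw [hsy, neg_mul]
      _ = -(star b * (xi * x)) := by rw [mul_assoc]
      _ = -(star b) := by rw [hxix, mul_one]
      _ = -((star b * x) * xi) := by rw [mul_assoc, hxxi, mul_one]
      _ = -((z * star b) * xi) := by rw [hbx]
      _ = -(z * (star b * xi)) := by rw [mul_assoc]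
      _ = z * star y := by rw [hsy, mul_neg]
  · -- z * z - star y * y = 1
    rw [hzz1, hyy2]; abel
  · -- -(x * y) = b
    rw [hydef, mul_neg, neg_neg, ← mul_assoc, hxxi, one_mul]
  · -- star y * x = -(star b)
    rw [hsy, neg_mul, mul_assoc, hxix, mul_one]
  · -- -(star y * y) = d
    rw [hyy2, neg_neg]
  · -- u * v = y
    rw [hvdef, ← mul_assoc, huui, one_mul]
  · -- star v * u = star y
    rw [hvdef, star_mul, hsui, mul_assoc, huiu, mul_one]
  · -- star v * v + w * w = z
    have hsv : star v = star y * ui := by rw [hvdef, star_mul, hsui]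
    have step1 : star v * v = star y * (xi * y) := by
      rw [hsv, hvdef, mul_assoc, ← mul_assoc ui ui y, huiui]
    have step2 : star y * (xi * y) = -(zi * d) := by
      calc star y * (xi * y) = (star b * xi) * (xi * (xi * b)) := by
            rw [hydef, hsy, neg_mul, mul_neg, mul_neg, neg_neg]
        _ = zi * (zi * (zi * (star b * b))) := by
            calc (star b * xi) * (xi * (xi * b)) = ((((star b * xi) * xi) * xi) * b) := by
                  simp only [mul_assoc]
              _ = ((((zi * star b) * xi) * xi) * b) := by rw [hbxi]
              _ = (((zi * (star b * xi)) * xi) * b) := by rw [mul_assoc zi]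
              _ = (((zi * (zi * star b)) * xi) * b) := by rw [hbxi]
              _ = ((zi * (zi * (star b * xi))) * b) := by simp only [mul_assoc]
              _ = ((zi * (zi * (zi * star b))) * b) := by rw [hbxi]
              _ = zi * (zi * (zi * (star b * b))) := by simp only [mul_assoc]
        _ = zi * (zi * (zi * (d * d - d))) := by rw [E3]
        _ = zi * ((zi * zi) * (d * d - d)) := by simp only [mul_assoc]
        _ = zi * (-d) := by
            congr 1
            have hdd : d * d - d = -(d * (1 - d)) := by noncomm_ring
            have comm2 : (zi * zi) * d = d * (zi * zi) := by
              rw [mul_assoc, hdzi, ← mul_assoc, hdzi, mul_assoc]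
            calc (zi * zi) * (d * d - d) = (zi * zi) * -(d * (1 - d)) := by rw [hdd]
              _ = -(((zi * zi) * d) * (1 - d)) := by simp only [mul_neg, mul_assoc]
              _ = -((d * (zi * zi)) * (1 - d)) := by rw [comm2]
              _ = -(d * ((zi * zi) * (1 - d))) := by rw [mul_assoc]
              _ = -d := by rw [hzz1d, mul_one]
        _ = -(zi * d) := by rw [mul_neg]
    rw [step1, step2, hww]
    calc -(zi * d) + zi = zi - zi * d := by abel
      _ = zi * (1 - d) := by rw [mul_sub, mul_one]
      _ = z := by
        rw [← hzz1, ← mul_assoc, hziz, one_mul]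
    -- zi * (z * z) = (zi * z) * z = z

end Scalar


open Matrix

set_option maxHeartbeats 2000000 in
/-- Let `q ∈ M₂(A)` be an idempotent with `ρ q* ρ = q`, where `ρ = diag(1,-1)`. Then
`ρ(2q - 1)` is positive (i.e. of the form `r* r`) if and only if there exists a positive
invertible `λ ∈ M₂(A)` with `λ ρ = ρ λ⁻¹` and `q = λ p λ⁻¹`, where `p = diag(1,0)`. -/
theorem stmt_10 {A : Type*} [CStarAlgebra A]
    (q ρ p : Matrix (Fin 2) (Fin 2) A)
    (hρ : ρ = !![1, 0; 0, -1]) (hp : p = !![1, 0; 0, 0])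
    (hq_idem : q * q = q) (hq_sym : ρ * star q * ρ = q) :
    (∃ r : Matrix (Fin 2) (Fin 2) A, ρ * (2 * q - 1) = star r * r) ↔
      ∃ l m : Matrix (Fin 2) (Fin 2) A,
        l * m = 1 ∧ m * l = 1 ∧ (∃ r, l = star r * r) ∧
        l * ρ = ρ * m ∧ q = l * p * m := by
  subst hρ hp
  constructor
  · rintro ⟨r, hr⟩
    -- entry facts
    have hsa : star (q 0 0) = q 0 0 := by
      have h := congrFun (congrFun hq_sym 0) 0
      simpa [Matrix.mul_apply, Fin.sum_univ_two, Matrix.star_apply, Matrix.vecMul,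
        dotProduct] using h
    have hsd : star (q 1 1) = q 1 1 := by
      have h := congrFun (congrFun hq_sym 1) 1
      simpa [Matrix.mul_apply, Fin.sum_univ_two, Matrix.star_apply, Matrix.vecMul,
        dotProduct] using h
    have hq10 : q 1 0 = -star (q 0 1) := by
      have h := congrFun (congrFun hq_sym 1) 0
      simp [Matrix.mul_apply, Fin.sum_univ_two, Matrix.star_apply, Matrix.vecMul,
        dotProduct] at h
      exact h.symm
    have E1' : q 0 0 * q 0 0 + q 0 1 * q 1 0 = q 0 0 := by
      have h := congrFun (congrFun hq_idem 0) 0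
      simpa [Matrix.mul_apply, Fin.sum_univ_two] using h
    have E2' : q 0 0 * q 0 1 + q 0 1 * q 1 1 = q 0 1 := by
      have h := congrFun (congrFun hq_idem 0) 1
      simpa [Matrix.mul_apply, Fin.sum_univ_two] using h
    have E3' : q 1 0 * q 0 1 + q 1 1 * q 1 1 = q 1 1 := by
      have h := congrFun (congrFun hq_idem 1) 1
      simpa [Matrix.mul_apply, Fin.sum_univ_two] using h
    have E1 : q 0 1 * star (q 0 1) = q 0 0 * q 0 0 - q 0 0 := by
      have h0 : q 0 0 * q 0 0 - q 0 1 * star (q 0 1) = q 0 0 := by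
        rw [sub_eq_add_neg, ← mul_neg, ← hq10]; exact E1'
      rw [eq_sub_iff_add_eq, add_comm]
      exact (sub_eq_iff_eq_add.mp h0).symm
    have E2 : q 0 0 * q 0 1 = q 0 1 - q 0 1 * q 1 1 := eq_sub_of_add_eq E2'
    have E3 : star (q 0 1) * q 0 1 = q 1 1 * q 1 1 - q 1 1 := by
      have h0 : q 1 1 * q 1 1 - star (q 0 1) * q 0 1 = q 1 1 := by
        rw [sub_eq_add_neg, ← neg_mul, ← hq10, add_comm]; exact E3'
      rw [eq_sub_iff_add_eq, add_comm]
      exact (sub_eq_iff_eq_add.mp h0).symm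
    have P1 : ∃ r₁ r₂ : A, q 0 0 + q 0 0 - 1 = star r₁ * r₁ + star r₂ * r₂ := by
      refine ⟨r 0 0, r 1 0, ?_⟩
      have h := congrFun (congrFun hr 0) 0
      simp [Matrix.mul_apply, Fin.sum_univ_two, Matrix.star_apply, Matrix.sub_apply, two_mul,
        Matrix.add_apply, Matrix.one_apply, Matrix.vecMul, dotProduct] at h
      convert h using 2
    have P2 : ∃ r₁ r₂ : A, 1 - (q 1 1 + q 1 1) = star r₁ * r₁ + star r₂ * r₂ := by
      refine ⟨r 0 1, r 1 1, ?_⟩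
      have h := congrFun (congrFun hr 1) 1
      simp [Matrix.mul_apply, Fin.sum_univ_two, Matrix.star_apply, Matrix.sub_apply, two_mul,
        Matrix.add_apply, Matrix.one_apply, Matrix.vecMul, dotProduct] at h
      convert h using 2
    obtain ⟨x, y, z, u, v, w, C1, C2, C3, C4, C5, C6, C7, C8, hsu, hsw, D1, D2, D3, D4⟩ :=
      aux_scalar (q 0 0) (q 0 1) (q 1 1) hsa hsd E1 E2 E3 P1 P2
    refine ⟨!![x, y; star y, z], !![x, -y; -star y, z], ?_, ?_, ⟨!![u, v; 0, w], ?_⟩, ?_, ?_⟩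
    · rw [Matrix.mul_fin_two, Matrix.one_fin_two]
      have e00 : x * x + y * -star y = 1 := by rw [mul_neg, ← sub_eq_add_neg]; exact C1
      have e01 : x * -y + y * z = 0 := by rw [mul_neg, ← C2, neg_add_cancel]
      have e10 : star y * x + z * -star y = 0 := by rw [mul_neg, C3, add_neg_cancel]
      have e11 : star y * -y + z * z = 0 + 1 := by
        rw [mul_neg, zero_add, neg_add_eq_sub]; exact C4
      rw [e00, e01, e10, e11, zero_add]
    · rw [Matrix.mul_fin_two, Matrix.one_fin_two]
      have e00 : x * x + -y * star y = 1 := by rw [neg_mul, ← sub_eq_add_neg]; exact C1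
      have e01 : x * y + -y * z = 0 := by rw [neg_mul, C2, add_neg_cancel]
      have e10 : -star y * x + z * star y = 0 := by rw [neg_mul, C3, neg_add_cancel]
      have e11 : -star y * y + z * z = 0 + 1 := by
        rw [neg_mul, zero_add, neg_add_eq_sub]; exact C4
      rw [e00, e01, e10, e11, zero_add]
    · have hst : star (!![u, v; 0, w] : Matrix (Fin 2) (Fin 2) A) = !![u, 0; star v, w] := by
        ext i j
        fin_cases i <;> fin_cases j <;> simp [Matrix.star_apply, hsu, hsw]
      rw [hst, Matrix.mul_fin_two]
      simp only [zero_mul, add_zero, mul_zero, zero_add]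
      rw [D1, D2, D3, D4]
    · rw [Matrix.mul_fin_two, Matrix.mul_fin_two]
      simp
    · have hqeta : q = !![q 0 0, q 0 1; -star (q 0 1), q 1 1] := by
        rw [← hq10]; exact Matrix.eta_fin_two q
      rw [hqeta, Matrix.mul_fin_two, Matrix.mul_fin_two]
      simp only [mul_one, mul_zero, add_zero, one_mul, zero_mul, zero_add, mul_neg]
      rw [C5, C7, ← C6, ← C8]
      simp [mul_neg]
  · rintro ⟨l, m, hlm, hml, ⟨r₀, hl⟩, hlρ, hq⟩
    set ρ : Matrix (Fin 2) (Fin 2) A := !![1, 0; 0, -1] with hρdef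
    have hρρ : ρ * ρ = 1 := by
      rw [hρdef, Matrix.mul_fin_two, Matrix.one_fin_two]
      norm_num
    have hsρ : star ρ = ρ := by
      ext i j
      fin_cases i <;> fin_cases j <;> simp [hρdef, Matrix.star_apply]
    have hm : m = ρ * l * ρ := by
      have h1 : ρ * (l * ρ) = ρ * (ρ * m) := by rw [hlρ]
      rw [← mul_assoc, ← mul_assoc, hρρ, one_mul] at h1
      exact h1.symm
    have hsl : star l = l := by rw [hl, StarMul.star_mul, star_star]
    have hsm : star m = m := by
      rw [hm, StarMul.star_mul, StarMul.star_mul, hsρ, hsl, mul_assoc]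
    refine ⟨m, ?_⟩
    set P : Matrix (Fin 2) (Fin 2) A := !![1, 0; 0, 0] with hPdef
    have h2p : (2 : Matrix (Fin 2) (Fin 2) A) * P - 1 = ρ := by
      rw [two_mul, hρdef, hPdef, Matrix.one_fin_two]
      ext i j
      fin_cases i <;> fin_cases j <;>
        simp [Matrix.add_apply, Matrix.sub_apply]
    have h2c : ∀ X Y : Matrix (Fin 2) (Fin 2) A, (2 * X) * Y = 2 * (X * Y) := fun X Y => by
      rw [two_mul, two_mul, add_mul]
    have h2c' : ∀ X Y : Matrix (Fin 2) (Fin 2) A, X * (2 * Y) = 2 * (X * Y) := fun X Y => by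
      rw [two_mul, two_mul, mul_add]
    have key : (2 : Matrix (Fin 2) (Fin 2) A) * (l * P * m) - l * m = l * (2 * P - 1) * m := by
      rw [mul_sub l (2 * P) 1, mul_one, sub_mul, h2c' l P, h2c (l * P) m]
    calc ρ * (2 * q - 1) = ρ * (2 * (l * P * m) - l * m) := by rw [hq, hlm]
      _ = ρ * (l * (2 * P - 1) * m) := by rw [key]
      _ = ρ * l * (2 * P - 1) * m := by rw [← mul_assoc, ← mul_assoc]
      _ = ρ * l * ρ * m := by rw [h2p]
      _ = m * m := by rw [← hm]
      _ = star m * m := by rw [hsm]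
end

section
/- Let A be a unital C*-algebra and x ∈ A² with θ(x,x) = 1 and x₁ invertible. Then y = x·x₁*(x₁x₁*)^{-1/2} satisfies θ(y,y) = 1, lies in the range of p_x, and its first coordinate y₁ = x₁x₁*(x₁x₁*)^{-1/2} is positive and invertible. Moreover y is the unique element of the range of p_x with θ(y,y) = 1 and positive invertible first coordinate. -/
/-- Let `x = (x₁, x₂) ∈ A²` with `θ(x,x) = 1` and `x₁` invertible, and let `t` be the
positive element with `t² = (x₁ x₁*)⁻¹` (i.e. `t = (x₁x₁*)^{-1/2}`). Then
`y = x · (x₁* t) = (x₁ x₁* t, x₂ x₁* t)` satisfies `θ(y,y) = 1`, lies in the range of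
`p_x`, and has positive invertible first coordinate; moreover it is the unique such
element of the range of `p_x`. -/
theorem stmt_12 {A : Type*} [CStarAlgebra A] [PartialOrder A] [StarOrderedRing A]
    (x₁ x₂ t : A) (hx₁ : IsUnit x₁)
    (hx : star x₁ * x₁ - star x₂ * x₂ = 1)
    (ht_pos : 0 ≤ t)
    (ht_sq : (x₁ * star x₁) * (t * t) = 1 ∧ (t * t) * (x₁ * star x₁) = 1) :
    (star (x₁ * star x₁ * t) * (x₁ * star x₁ * t) -
        star (x₂ * star x₁ * t) * (x₂ * star x₁ * t) = 1) ∧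
    (∃ a : A, x₁ * star x₁ * t = x₁ * a ∧ x₂ * star x₁ * t = x₂ * a) ∧
    (0 ≤ x₁ * star x₁ * t ∧ IsUnit (x₁ * star x₁ * t)) ∧
    (∀ y₁ y₂ : A, (∃ a : A, y₁ = x₁ * a ∧ y₂ = x₂ * a) →
      star y₁ * y₁ - star y₂ * y₂ = 1 → 0 ≤ y₁ → IsUnit y₁ →
      y₁ = x₁ * star x₁ * t ∧ y₂ = x₂ * star x₁ * t) := by
  set r := x₁ * star x₁ with hr
  obtain ⟨h1, h2⟩ := ht_sq
  have ht_sa : star t = t := (IsSelfAdjoint.of_nonneg ht_pos).star_eq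
  have hr_sa : star r = r := by simp [hr, mul_assoc]
  -- commutation: r * t = t * r
  have hcomm : r * t = t * r := by
    calc r * t = (r * t) * ((t * t) * r) := by rw [h2, mul_one]
      _ = (r * (t * t)) * (t * r) := by noncomm_ring
      _ = t * r := by rw [h1, one_mul]
  -- t is a unit with inverse r * t
  have htu : t * (r * t) = 1 := by rw [hcomm, ← mul_assoc]; exact h2
  have hut : (r * t) * t = 1 := by rw [mul_assoc]; exact h1
  let u : Aˣ := ⟨t, r * t, htu, hut⟩
  have h_inv_nonneg : (0 : A) ≤ r * t := CFC.inv_nonneg_of_nonneg u ht_pos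
  have h_unit : IsUnit (r * t) := (u⁻¹).isUnit
  -- t * r * t = 1
  have htrt : t * (r * t) = 1 := htu
  -- first: theta(y,y) = 1
  have hx2 : star x₂ * x₂ = star x₁ * x₁ - 1 := by
    rw [← hx]; abel
  have hsq : (r * t) * (r * t) = r := by
    calc (r * t) * (r * t) = r * ((t * r) * t) := by noncomm_ring
      _ = r * ((r * t) * t) := by rw [hcomm]
      _ = r := by rw [hut, mul_one]
  have theta : star (r * t) * (r * t) - star (x₂ * star x₁ * t) * (x₂ * star x₁ * t) = 1 := by
    have e1 : star (r * t) * (r * t) = t * (r * r) * t := by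
      rw [star_mul, ht_sa, hr_sa]; noncomm_ring
    have e2 : star (x₂ * star x₁ * t) * (x₂ * star x₁ * t)
        = t * (x₁ * (star x₂ * x₂) * star x₁) * t := by
      simp only [star_mul, ht_sa, star_star]; noncomm_ring
    rw [e1, e2, hx2]
    have : x₁ * (star x₁ * x₁ - 1) * star x₁ = r * r - r := by
      simp only [hr]; noncomm_ring
    rw [this]
    have : t * (r * r - r) * t = t * (r * r) * t - t * (r * t) := by noncomm_ring
    rw [this, htrt]
    abel
  refine ⟨theta, ⟨star x₁ * t, by rw [mul_assoc], by rw [mul_assoc]⟩,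
    ⟨h_inv_nonneg, h_unit⟩, ?_⟩
  -- uniqueness
  rintro y₁ y₂ ⟨a, rfl, rfl⟩ hθ hpos hunit
  -- star a * a = 1
  have haa : star a * a = 1 := by
    have : star (x₁ * a) * (x₁ * a) - star (x₂ * a) * (x₂ * a)
        = star a * (star x₁ * x₁ - star x₂ * x₂) * a := by
      simp only [star_mul]; noncomm_ring
    rw [this, hx, mul_one] at hθ
    exact hθ
  -- a is a unit
  have hau : IsUnit a := by
    have := (hx₁.unit⁻¹).isUnit.mul hunit
    rwa [← mul_assoc, IsUnit.val_inv_mul, one_mul] at this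
  have haa' : a * star a = 1 := by
    have h3 : star a = ↑hau.unit⁻¹ := by
      have h4 := congrArg (· * (↑hau.unit⁻¹ : A)) haa
      simpa [mul_assoc, hau.mul_val_inv] using h4
    rw [h3, hau.mul_val_inv]
  -- y₁ is a positive square root of r
  have h_sa : star (x₁ * a) = x₁ * a := (IsSelfAdjoint.of_nonneg hpos).star_eq
  have hy_sq : (x₁ * a) * (x₁ * a) = r := by
    calc (x₁ * a) * (x₁ * a) = (x₁ * a) * star (x₁ * a) := by rw [h_sa]
      _ = x₁ * (a * star a) * star x₁ := by rw [star_mul]; noncomm_ring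
      _ = r := by rw [haa', mul_one]
  have key : x₁ * a = r * t := by
    have e1 : CFC.sqrt r = x₁ * a := CFC.sqrt_unique hy_sq hpos
    have e2 : CFC.sqrt r = r * t := CFC.sqrt_unique hsq h_inv_nonneg
    rw [← e1, e2]
  have ha_eq : a = star x₁ * t := by
    have : x₁ * a = x₁ * (star x₁ * t) := by rw [key, mul_assoc]
    exact hx₁.mul_left_cancel this
  exact ⟨by rw [key], by rw [ha_eq, mul_assoc]⟩
end

section
/- Let A be a unital C*-algebra and x ∈ A² with θ(x,x) = 1 and x₁ invertible, q = p_x = xx*ρ. For any X ∈ M₂(A) with ρX*ρ = X and Xq + qX = X, the vector Xx lies in the nullspace of q, and (Xx)x*ρ + x(Xx)*ρ = X. -/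
set_option maxHeartbeats 1000000

open Matrix

/-- Let `x ∈ A²` with `θ(x,x) = 1` and `x₁` invertible, and `q = p_x = x x* ρ`. For any
tangent vector `X` at `q` (`ρ X* ρ = X` and `Xq + qX = X`), the lifted vector `v = Xx`
lies in the nullspace of `q`, and `v x* ρ + x v* ρ = X`. -/
theorem stmt_17 {A : Type*} [CStarAlgebra A]
    (ρ q X : Matrix (Fin 2) (Fin 2) A) (hρ : ρ = !![1, 0; 0, -1])
    (x : Fin 2 → A) (hx : star (x 0) * x 0 - star (x 1) * x 1 = 1)
    (hx₁ : IsUnit (x 0))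
    (hq : q = Matrix.of fun i j => (x i * star (x j)) * (if j = 0 then 1 else -1))
    (hX_sym : ρ * star X * ρ = X) (hX_tan : X * q + q * X = X) :
    q.mulVec (X.mulVec x) = 0 ∧
      (Matrix.of fun i j =>
          (X.mulVec x i * star (x j) + x i * star (X.mulVec x j)) *
            (if j = 0 then 1 else -1)) = X := by
  subst hρ
  -- entrywise symmetry facts
  have hs00 := congrFun (congrFun hX_sym 0) 0
  have hs01 := congrFun (congrFun hX_sym 0) 1
  have hs10 := congrFun (congrFun hX_sym 1) 0
  have hs11 := congrFun (congrFun hX_sym 1) 1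
  simp [Matrix.mul_apply, Matrix.vecMul, dotProduct, Fin.sum_univ_two, Matrix.star_apply] at hs00 hs01 hs10 hs11
  have hs01' : star (X 1 0) = -X 0 1 := neg_eq_iff_eq_neg.mp hs01
  have hs10' : star (X 0 1) = -X 1 0 := neg_eq_iff_eq_neg.mp hs10
  have hqx : q.mulVec x = x := by
    funext i
    rw [hq]
    simp [Matrix.mulVec, dotProduct, Fin.sum_univ_two]
    calc x i * star (x 0) * x 0 + -(x i * star (x 1) * x 1)
        = x i * (star (x 0) * x 0 - star (x 1) * x 1) := by noncomm_ring
      _ = x i := by rw [hx, mul_one]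
  have hqX : q * X = X - X * q := eq_sub_of_add_eq' hX_tan
  constructor
  · rw [Matrix.mulVec_mulVec, hqX, Matrix.sub_mulVec, ← Matrix.mulVec_mulVec, hqx, sub_self]
  · have key : (Matrix.of fun i j =>
          (X.mulVec x i * star (x j) + x i * star (X.mulVec x j)) *
            (if j = 0 then 1 else -1)) = X * q + q * X := by
      ext i j
      fin_cases i <;> fin_cases j <;>
        simp [Matrix.mul_apply, Matrix.mulVec, dotProduct, Fin.sum_univ_two, hq,
          star_add, hs00, hs01', hs10', hs11] <;>
        noncomm_ring
    rw [key, hX_tan]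
end
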